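/- arXiv:0906.4018 — 3 statements merged into one kernel-verified Lean document; each statement's English description precedes it below -/
import Mathlib

section
/- For ṽ ∈ ℝ and N ≥ 1, the union over k ∈ {1,…,N} of the sets {z ∈ ℝ : √(ṽ² + sin²(πk/N)) ≤ |z| ≤ √(5 + ṽ² + 4cos(πk/N))} ∪ {z : √(ṽ² + sin²(πk/N)) ≤ |z| ≤ √(5 + ṽ² − 4cos(πk/N))} equals [−√(9+ṽ²), √(9+ṽ²)] \ (−|ṽ|, |ṽ|). -/
open Real in
theorem armchair_unperturbed_spectrum (N : ℕ) (hN : 1 ≤ N) (vt : ℝ) :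
    (⋃ k ∈ Finset.Icc 1 N,
      ({z : ℝ | Real.sqrt (vt ^ 2 + Real.sin (π * k / N) ^ 2) ≤ |z| ∧
          |z| ≤ Real.sqrt (5 + vt ^ 2 + 4 * Real.cos (π * k / N))} ∪
       {z : ℝ | Real.sqrt (vt ^ 2 + Real.sin (π * k / N) ^ 2) ≤ |z| ∧
          |z| ≤ Real.sqrt (5 + vt ^ 2 - 4 * Real.cos (π * k / N))})) =
    Set.Icc (-Real.sqrt (9 + vt ^ 2)) (Real.sqrt (9 + vt ^ 2)) \
      Set.Ioo (-|vt|) |vt| := by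
  have hNne : (N : ℝ) ≠ 0 := by positivity
  have hθN : π * N / N = π := by field_simp
  ext z
  simp only [Set.mem_iUnion, Set.mem_union, Set.mem_setOf_eq, Set.mem_diff,
    Set.mem_Icc, Set.mem_Ioo, not_and, not_lt, exists_prop, Finset.mem_Icc]
  constructor
  · rintro ⟨k, hk, h⟩
    have hc1 : Real.cos (π * k / N) ≤ 1 := Real.cos_le_one _
    have hc2 : -1 ≤ Real.cos (π * k / N) := Real.neg_one_le_cos _
    have hlow : |vt| ≤ |z| := by
      have h1 : Real.sqrt (vt ^ 2) ≤ Real.sqrt (vt ^ 2 + Real.sin (π * k / N) ^ 2) :=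
        Real.sqrt_le_sqrt (by nlinarith [sq_nonneg (Real.sin (π * k / N))])
      rw [Real.sqrt_sq_eq_abs] at h1
      rcases h with ⟨ha, _⟩ | ⟨ha, _⟩ <;> linarith
    have hhigh : |z| ≤ Real.sqrt (9 + vt ^ 2) := by
      rcases h with ⟨_, hb⟩ | ⟨_, hb⟩
      · exact hb.trans (Real.sqrt_le_sqrt (by nlinarith))
      · exact hb.trans (Real.sqrt_le_sqrt (by nlinarith))
    have habs := abs_le.mp hhigh
    refine ⟨⟨habs.1, habs.2⟩, fun hlt => ?_⟩
    rcases abs_cases z with ⟨hz, _⟩ | ⟨hz, _⟩ <;> linarith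
  · rintro ⟨⟨h1, h2⟩, h3⟩
    have hlow : |vt| ≤ |z| := by
      rcases lt_or_ge (-|vt|) z with hl | hl
      · exact (h3 hl).trans (le_abs_self z)
      · have : |vt| ≤ -z := by linarith
        exact this.trans (neg_le_abs z)
    refine ⟨N, ⟨hN, le_refl N⟩, Or.inr ⟨?_, ?_⟩⟩
    · rw [hθN, Real.sin_pi]
      simpa [Real.sqrt_sq_eq_abs] using hlow
    · rw [hθN, Real.cos_pi]
      have : 5 + vt ^ 2 - 4 * (-1 : ℝ) = 9 + vt ^ 2 := by ring
      rw [this]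
      exact abs_le.mpr ⟨h1, h2⟩
end

section
/- Let a > 0, φ ∈ ℝ, p ≥ 1 and consider the 2p×2p matrix K⁰(e^{iφ}, a) with (K⁰)_{n,n+1} = (K⁰)_{n+1,n} alternating between 1 and a (starting with 1), corner entries (K⁰)_{1,2p} = a/e^{iφ}, (K⁰)_{2p,1} = e^{iφ}a, and zeros elsewhere. Then the eigenvalues of K⁰(e^{iφ}, a) are exactly the numbers ±|a + e^{i(φ+2πn)/p}| for n ∈ {1,…,p}. -/
open Complex Finset

namespace FloquetAux
open scoped Matrix

noncomputable def om (p : ℕ) (φ : ℝ) (n : ℕ) : ℂ :=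
  Complex.exp (((φ + 2 * Real.pi * (n + 1)) / p : ℝ) * Complex.I)

noncomputable def cc (p : ℕ) (a φ : ℝ) (n : ℕ) : ℂ := 1 + a * om p φ n

noncomputable def lam (p : ℕ) (a φ : ℝ) (n : ℕ) : ℝ :=
  ‖(a : ℂ) + om p φ n‖

lemma abs_om (p : ℕ) (φ : ℝ) (n : ℕ) : ‖om p φ n‖ = 1 := by
  simp [om, Complex.norm_exp]

lemma om_ne_zero (p : ℕ) (φ : ℝ) (n : ℕ) : om p φ n ≠ 0 := Complex.exp_ne_zero _

lemma conj_om (p : ℕ) (φ : ℝ) (n : ℕ) :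
    (starRingEnd ℂ) (om p φ n) = (om p φ n)⁻¹ := by
  rw [om, ← Complex.exp_conj, ← Complex.exp_neg]
  congr 1
  have : (starRingEnd ℂ) ((((φ + 2 * Real.pi * (n + 1)) / p : ℝ) : ℂ)) = (((φ + 2 * Real.pi * (n + 1)) / p : ℝ) : ℂ) := Complex.conj_ofReal _
  rw [map_mul, this, Complex.conj_I]
  ring

lemma om_pow (p : ℕ) (hp : 1 ≤ p) (φ : ℝ) (n : ℕ) :
    om p φ n ^ p = Complex.exp (φ * Complex.I) := by
  rw [om, ← Complex.exp_nat_mul]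
  have hp0 : (p : ℂ) ≠ 0 := by exact_mod_cast (Nat.pos_of_ne_zero (by omega)).ne'
  have : (p : ℂ) * (((φ + 2 * Real.pi * (n + 1)) / p : ℝ) * Complex.I)
      = φ * Complex.I + (n + 1 : ℕ) * (2 * Real.pi * Complex.I) := by
    push_cast
    field_simp
  rw [this, Complex.exp_add, Complex.exp_nat_mul_two_pi_mul_I, mul_one]

lemma lam_eq_abs_cc (p : ℕ) (a φ : ℝ) (n : ℕ) :
    lam p a φ n = ‖cc p a φ n‖ := by
  have : cc p a φ n = om p φ n * ((starRingEnd ℂ) ((a:ℂ) + om p φ n)) := by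
    rw [map_add, Complex.conj_ofReal, conj_om, cc]
    field_simp [om_ne_zero]
    ring
  rw [lam, this, norm_mul, abs_om, Complex.norm_conj, one_mul]

lemma cc_mul_conj (p : ℕ) (a φ : ℝ) (n : ℕ) :
    cc p a φ n * (starRingEnd ℂ) (cc p a φ n) = ((lam p a φ n : ℝ) ^ 2 : ℝ) := by
  rw [Complex.mul_conj', lam_eq_abs_cc]
  norm_cast



noncomputable def mu (p : ℕ) (a φ : ℝ) (n s : ℕ) : ℂ :=
  if s = 0 then ((lam p a φ n : ℝ) : ℂ) else -((lam p a φ n : ℝ) : ℂ)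

noncomputable def uv (p : ℕ) (a φ : ℝ) (n s r : ℕ) : ℂ :=
  if cc p a φ n = 0 then (if r = s then 1 else 0)
  else if r = 0 then (starRingEnd ℂ) (cc p a φ n) else mu p a φ n s

lemma lam_of_cc_eq_zero (p : ℕ) (a φ : ℝ) (n : ℕ) (h : cc p a φ n = 0) :
    lam p a φ n = 0 := by
  rw [lam_eq_abs_cc, h, norm_zero]

lemma mu_sq (p : ℕ) (a φ : ℝ) (n s : ℕ) :
    mu p a φ n s * mu p a φ n s = ((lam p a φ n ^ 2 : ℝ) : ℂ) := by
  rcases eq_or_ne s 0 with h | h <;> simp [mu, h] <;> push_cast <;> ring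

/-- first eigen relation:  conj(c) * v = μ * u -/
lemma eigen1 (p : ℕ) (a φ : ℝ) (n s : ℕ) :
    (starRingEnd ℂ) (cc p a φ n) * uv p a φ n s 1 = mu p a φ n s * uv p a φ n s 0 := by
  rcases eq_or_ne (cc p a φ n) 0 with h | h
  · simp [uv, h, mu, lam_of_cc_eq_zero p a φ n h]
  · simp only [uv, if_neg h, if_pos rfl]
    norm_num
    ring

/-- second eigen relation:  c * u = μ * v -/
lemma eigen2 (p : ℕ) (a φ : ℝ) (n s : ℕ) :
    cc p a φ n * uv p a φ n s 0 = mu p a φ n s * uv p a φ n s 1 := by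
  rcases eq_or_ne (cc p a φ n) 0 with h | h
  · simp [uv, h, mu, lam_of_cc_eq_zero p a φ n h]
  · simp only [uv, if_neg h, if_pos rfl]
    norm_num
    rw [cc_mul_conj, ← mu_sq p a φ n s]

/-- inner product of the 2-component eigenvector pieces -/
noncomputable def ip (p : ℕ) (a φ : ℝ) (n s t : ℕ) : ℂ :=
  (starRingEnd ℂ) (uv p a φ n s 0) * uv p a φ n t 0 +
  (starRingEnd ℂ) (uv p a φ n s 1) * uv p a φ n t 1

lemma ip_ne (p : ℕ) (a φ : ℝ) (n s t : ℕ) (hs : s < 2) (ht : t < 2) (hst : s ≠ t) :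
    ip p a φ n s t = 0 := by
  rcases eq_or_ne (cc p a φ n) 0 with h | h
  · interval_cases s <;> interval_cases t <;> simp_all [ip, uv, h]
  · have h2 : cc p a φ n * (starRingEnd ℂ) (cc p a φ n)
        = ((lam p a φ n : ℝ) : ℂ) ^ 2 := by
      rw [cc_mul_conj]; push_cast; ring
    interval_cases s <;> interval_cases t <;> simp_all [ip, uv, mu] <;> ring
lemma ip_self_ne_zero (p : ℕ) (a φ : ℝ) (n s : ℕ) (hs : s < 2) :
    ip p a φ n s s ≠ 0 := by
  rcases eq_or_ne (cc p a φ n) 0 with h | h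
  · interval_cases s <;> simp [ip, uv, h]
  · have hl : lam p a φ n ≠ 0 := by
      rw [lam_eq_abs_cc]; simpa using h
    have h2 : cc p a φ n * (starRingEnd ℂ) (cc p a φ n)
        = ((lam p a φ n : ℝ) : ℂ) ^ 2 := by
      rw [cc_mul_conj]; push_cast; ring
    have key : ip p a φ n s s = ((2 * lam p a φ n ^ 2 : ℝ) : ℂ) := by
      interval_cases s <;> simp_all [ip, uv, mu] <;> push_cast <;> ring
    rw [key]
    simpa using pow_ne_zero 2 hl

lemma cconj (p : ℕ) (a φ : ℝ) (n : ℕ) :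
    (starRingEnd ℂ) (cc p a φ n) = 1 + a * (om p φ n)⁻¹ := by
  rw [cc, map_add, map_one, map_mul, Complex.conj_ofReal, conj_om]

lemma om_mul_conj_cc (p : ℕ) (a φ : ℝ) (n : ℕ) :
    om p φ n * (starRingEnd ℂ) (cc p a φ n) = om p φ n + a := by
  rw [cconj]
  field_simp [om_ne_zero]

/-- ω·μ·u = (ω + a)·v -/
lemma eigen1' (p : ℕ) (a φ : ℝ) (n s : ℕ) :
    (om p φ n + (a:ℂ)) * uv p a φ n s 1 = om p φ n * (mu p a φ n s * uv p a φ n s 0) := by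
  rw [← om_mul_conj_cc, mul_assoc, eigen1]

noncomputable def Vm (p : ℕ) (a φ : ℝ) : Matrix (Fin (2*p)) (Fin (2*p)) ℂ :=
  fun i j => om p φ ((j:ℕ)/2) ^ ((i:ℕ)/2) * uv p a φ ((j:ℕ)/2) ((j:ℕ)%2) ((i:ℕ)%2)

noncomputable def dd (p : ℕ) (a φ : ℝ) (j : ℕ) : ℂ := mu p a φ (j/2) (j%2)

lemma sum_ite_mul {N : ℕ} (P : ℕ → Prop) [DecidablePred P] (c : Fin N → ℂ) (G : Fin N → ℂ)
    (m : ℕ) (hm : m < N) (hiff : ∀ l : Fin N, P (l:ℕ) ↔ (l:ℕ) = m) :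
    ∑ l : Fin N, (if P (l:ℕ) then c l else 0) * G l = c ⟨m, hm⟩ * G ⟨m, hm⟩ := by
  rw [Finset.sum_eq_single ⟨m, hm⟩]
  · rw [if_pos ((hiff _).mpr rfl)]
  · intro b _ hb
    rw [if_neg, zero_mul]
    exact fun hp => hb (Fin.ext ((hiff b).mp hp))
  · exact fun h => absurd (Finset.mem_univ _) h

lemma sum_ite_mul_zero {N : ℕ} (P : ℕ → Prop) [DecidablePred P] (c : Fin N → ℂ) (G : Fin N → ℂ)
    (hiff : ∀ l : Fin N, ¬ P (l:ℕ)) :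
    ∑ l : Fin N, (if P (l:ℕ) then c l else 0) * G l = 0 :=
  Finset.sum_eq_zero (fun l _ => by rw [if_neg (hiff l), zero_mul])

lemma KV (p : ℕ) (hp : 1 ≤ p) (a φ : ℝ)
    (K : Matrix (Fin (2 * p)) (Fin (2 * p)) ℂ)
    (hK : ∀ i j : Fin (2 * p), K i j =
      (if (i : ℕ) + 1 = (j : ℕ) then (if (i : ℕ) % 2 = 0 then 1 else (a : ℂ)) else 0) +
      (if (j : ℕ) + 1 = (i : ℕ) then (if (j : ℕ) % 2 = 0 then 1 else (a : ℂ)) else 0) +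
      (if (i : ℕ) = 0 ∧ (j : ℕ) = 2 * p - 1 then
        (a : ℂ) / Complex.exp (φ * Complex.I) else 0) +
      (if (i : ℕ) = 2 * p - 1 ∧ (j : ℕ) = 0 then
        Complex.exp (φ * Complex.I) * (a : ℂ) else 0)) :
    K * Vm p a φ = Vm p a φ * Matrix.diagonal (fun j : Fin (2*p) => dd p a φ (j:ℕ)) := by
  obtain ⟨q, hq⟩ : ∃ q, p = q + 1 := ⟨p - 1, by omega⟩
  ext i j
  rw [Matrix.mul_apply, Matrix.mul_diagonal]
  simp_rw [hK, add_mul, Finset.sum_add_distrib]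
  set n := (j:ℕ)/2 with hn
  set s := (j:ℕ)%2 with hs
  have hdd : dd p a φ (j:ℕ) = mu p a φ n s := rfl
  rw [hdd]
  have homega : om p φ n ≠ 0 := om_ne_zero p φ n
  have hτ : Complex.exp (φ * Complex.I) = om p φ n ^ q * om p φ n := by
    rw [← om_pow p hp φ n, hq, pow_succ]
  by_cases h0 : (i:ℕ) = 0
  · -- i = 0
    have e1 : ∑ l : Fin (2*p), (if (i:ℕ) + 1 = (l:ℕ) then
        (if (i:ℕ) % 2 = 0 then (1:ℂ) else (a:ℂ)) else 0) * Vm p a φ l j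
        = (if (i:ℕ) % 2 = 0 then (1:ℂ) else (a:ℂ)) * Vm p a φ ⟨1, by omega⟩ j :=
      sum_ite_mul (fun lv => (i:ℕ) + 1 = lv) (fun _ => if (i:ℕ) % 2 = 0 then (1:ℂ) else (a:ℂ)) (fun l => Vm p a φ l j) 1 (by omega) (fun l => by omega)
    have e2 : ∑ l : Fin (2*p), (if (l:ℕ) + 1 = (i:ℕ) then
        (if (l:ℕ) % 2 = 0 then (1:ℂ) else (a:ℂ)) else 0) * Vm p a φ l j = 0 :=
      sum_ite_mul_zero (fun lv => lv + 1 = (i:ℕ)) (fun l => if (l:ℕ) % 2 = 0 then (1:ℂ) else (a:ℂ)) (fun l => Vm p a φ l j) (fun l => by omega)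
    have e3 : ∑ l : Fin (2*p), (if (i:ℕ) = 0 ∧ (l:ℕ) = 2*p - 1 then
        (a:ℂ) / Complex.exp (φ * Complex.I) else 0) * Vm p a φ l j
        = ((a:ℂ) / Complex.exp (φ * Complex.I)) * Vm p a φ ⟨2*p - 1, by omega⟩ j :=
      sum_ite_mul (fun lv => (i:ℕ) = 0 ∧ lv = 2*p - 1) (fun _ => (a:ℂ) / Complex.exp (φ * Complex.I)) (fun l => Vm p a φ l j) (2*p-1) (by omega) (fun l => by omega)
    have e4 : ∑ l : Fin (2*p), (if (i:ℕ) = 2*p - 1 ∧ (l:ℕ) = 0 then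
        Complex.exp (φ * Complex.I) * (a:ℂ) else 0) * Vm p a φ l j = 0 :=
      sum_ite_mul_zero (fun lv => (i:ℕ) = 2*p - 1 ∧ lv = 0) (fun _ => Complex.exp (φ * Complex.I) * (a:ℂ)) (fun l => Vm p a φ l j) (fun l => by omega)
    rw [e1, e2, e3, e4]
    simp only [Vm, Fin.val_mk]
    have d1 : (1:ℕ)/2 = 0 := by omega
    have d2 : (1:ℕ)%2 = 1 := by omega
    have d3 : (2*p-1)/2 = q := by omega
    have d4 : (2*p-1)%2 = 1 := by omega
    have d5 : (i:ℕ)/2 = 0 := by omega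
    have d6 : (i:ℕ)%2 = 0 := by omega
    rw [hτ]
    simp only [d1, d2, d3, d4, d5, d6, pow_zero, one_mul, if_pos rfl, if_true]
    have hq0 : om p φ n ^ q ≠ 0 := pow_ne_zero _ homega
    field_simp
    linear_combination (om p φ n ^ q) * eigen1' p a φ n s
  · by_cases hlast : (i:ℕ) = 2*p - 1
    · -- i = 2p-1
      have e1 : ∑ l : Fin (2*p), (if (i:ℕ) + 1 = (l:ℕ) then
          (if (i:ℕ) % 2 = 0 then (1:ℂ) else (a:ℂ)) else 0) * Vm p a φ l j = 0 :=
        sum_ite_mul_zero (fun lv => (i:ℕ) + 1 = lv) (fun _ => if (i:ℕ) % 2 = 0 then (1:ℂ) else (a:ℂ)) (fun l => Vm p a φ l j) (fun l => by omega)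
      have e2 : ∑ l : Fin (2*p), (if (l:ℕ) + 1 = (i:ℕ) then
          (if (l:ℕ) % 2 = 0 then (1:ℂ) else (a:ℂ)) else 0) * Vm p a φ l j
          = (if (2*p-2) % 2 = 0 then (1:ℂ) else (a:ℂ)) * Vm p a φ ⟨2*p - 2, by omega⟩ j :=
        sum_ite_mul (fun lv => lv + 1 = (i:ℕ)) (fun l => if (l:ℕ) % 2 = 0 then (1:ℂ) else (a:ℂ)) (fun l => Vm p a φ l j) (2*p-2) (by omega) (fun l => by omega)
      have e3 : ∑ l : Fin (2*p), (if (i:ℕ) = 0 ∧ (l:ℕ) = 2*p - 1 then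
          (a:ℂ) / Complex.exp (φ * Complex.I) else 0) * Vm p a φ l j = 0 :=
        sum_ite_mul_zero (fun lv => (i:ℕ) = 0 ∧ lv = 2*p - 1) (fun _ => (a:ℂ) / Complex.exp (φ * Complex.I)) (fun l => Vm p a φ l j) (fun l => by omega)
      have e4 : ∑ l : Fin (2*p), (if (i:ℕ) = 2*p - 1 ∧ (l:ℕ) = 0 then
          Complex.exp (φ * Complex.I) * (a:ℂ) else 0) * Vm p a φ l j
          = (Complex.exp (φ * Complex.I) * (a:ℂ)) * Vm p a φ ⟨0, by omega⟩ j :=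
        sum_ite_mul (fun lv => (i:ℕ) = 2*p - 1 ∧ lv = 0) (fun _ => Complex.exp (φ * Complex.I) * (a:ℂ)) (fun l => Vm p a φ l j) 0 (by omega) (fun l => by omega)
      rw [e1, e2, e3, e4]
      simp only [Vm, Fin.val_mk]
      have d1 : (2*p-2)/2 = q := by omega
      have d2 : (2*p-2)%2 = 0 := by omega
      have d5 : (i:ℕ)/2 = q := by omega
      have d6 : (i:ℕ)%2 = 1 := by omega
      rw [hτ]
      simp only [d1, d2, d5, d6, pow_zero, one_mul, Nat.zero_div, Nat.zero_mod, if_pos rfl]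
      norm_num
      have he2 := eigen2 p a φ n s
      rw [cc] at he2
      linear_combination (om p φ n ^ q) * he2
    · -- interior
      have e3 : ∑ l : Fin (2*p), (if (i:ℕ) = 0 ∧ (l:ℕ) = 2*p - 1 then
          (a:ℂ) / Complex.exp (φ * Complex.I) else 0) * Vm p a φ l j = 0 :=
        sum_ite_mul_zero (fun lv => (i:ℕ) = 0 ∧ lv = 2*p - 1) (fun _ => (a:ℂ) / Complex.exp (φ * Complex.I)) (fun l => Vm p a φ l j) (fun l => by omega)
      have e4 : ∑ l : Fin (2*p), (if (i:ℕ) = 2*p - 1 ∧ (l:ℕ) = 0 then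
          Complex.exp (φ * Complex.I) * (a:ℂ) else 0) * Vm p a φ l j = 0 :=
        sum_ite_mul_zero (fun lv => (i:ℕ) = 2*p - 1 ∧ lv = 0) (fun _ => Complex.exp (φ * Complex.I) * (a:ℂ)) (fun l => Vm p a φ l j) (fun l => by omega)
      rcases Nat.even_or_odd (i:ℕ) with ⟨k, hk⟩ | ⟨k, hk⟩
      · -- i = 2(k'+1)
        obtain ⟨k', hk'⟩ : ∃ k', (i:ℕ) = 2*(k'+1) := ⟨(i:ℕ)/2 - 1, by omega⟩
        have e1 : ∑ l : Fin (2*p), (if (i:ℕ) + 1 = (l:ℕ) then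
            (if (i:ℕ) % 2 = 0 then (1:ℂ) else (a:ℂ)) else 0) * Vm p a φ l j
            = (if (i:ℕ) % 2 = 0 then (1:ℂ) else (a:ℂ)) * Vm p a φ ⟨2*k'+3, by omega⟩ j :=
          sum_ite_mul (fun lv => (i:ℕ) + 1 = lv) (fun _ => if (i:ℕ) % 2 = 0 then (1:ℂ) else (a:ℂ)) (fun l => Vm p a φ l j) (2*k'+3) (by omega) (fun l => by omega)
        have e2 : ∑ l : Fin (2*p), (if (l:ℕ) + 1 = (i:ℕ) then
            (if (l:ℕ) % 2 = 0 then (1:ℂ) else (a:ℂ)) else 0) * Vm p a φ l j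
            = (if (2*k'+1) % 2 = 0 then (1:ℂ) else (a:ℂ)) * Vm p a φ ⟨2*k'+1, by omega⟩ j :=
          sum_ite_mul (fun lv => lv + 1 = (i:ℕ)) (fun l => if (l:ℕ) % 2 = 0 then (1:ℂ) else (a:ℂ)) (fun l => Vm p a φ l j) (2*k'+1) (by omega) (fun l => by omega)
        rw [e1, e2, e3, e4]
        simp only [Vm, Fin.val_mk]
        have d1 : (2*k'+3)/2 = k'+1 := by omega
        have d2 : (2*k'+3)%2 = 1 := by omega
        have d3 : (2*k'+1)/2 = k' := by omega
        have d4 : (2*k'+1)%2 = 1 := by omega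
        have d5 : (i:ℕ)/2 = k'+1 := by omega
        have d6 : (i:ℕ)%2 = 0 := by omega
        simp only [d1, d2, d3, d4, d5, d6, if_pos rfl]
        norm_num
        linear_combination (om p φ n ^ k') * eigen1' p a φ n s
      · -- i = 2k+1
        have e1 : ∑ l : Fin (2*p), (if (i:ℕ) + 1 = (l:ℕ) then
            (if (i:ℕ) % 2 = 0 then (1:ℂ) else (a:ℂ)) else 0) * Vm p a φ l j
            = (if (i:ℕ) % 2 = 0 then (1:ℂ) else (a:ℂ)) * Vm p a φ ⟨2*k+2, by omega⟩ j :=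
          sum_ite_mul (fun lv => (i:ℕ) + 1 = lv) (fun _ => if (i:ℕ) % 2 = 0 then (1:ℂ) else (a:ℂ)) (fun l => Vm p a φ l j) (2*k+2) (by omega) (fun l => by omega)
        have e2 : ∑ l : Fin (2*p), (if (l:ℕ) + 1 = (i:ℕ) then
            (if (l:ℕ) % 2 = 0 then (1:ℂ) else (a:ℂ)) else 0) * Vm p a φ l j
            = (if (2*k) % 2 = 0 then (1:ℂ) else (a:ℂ)) * Vm p a φ ⟨2*k, by omega⟩ j :=
          sum_ite_mul (fun lv => lv + 1 = (i:ℕ)) (fun l => if (l:ℕ) % 2 = 0 then (1:ℂ) else (a:ℂ)) (fun l => Vm p a φ l j) (2*k) (by omega) (fun l => by omega)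
        rw [e1, e2, e3, e4]
        simp only [Vm, Fin.val_mk]
        have d1 : (2*k+2)/2 = k+1 := by omega
        have d2 : (2*k+2)%2 = 0 := by omega
        have d3 : (2*k)/2 = k := by omega
        have d4 : (2*k)%2 = 0 := by omega
        have d5 : (i:ℕ)/2 = k := by omega
        have d6 : (i:ℕ)%2 = 1 := by omega
        simp only [d1, d2, d3, d4, d5, d6, if_pos rfl]
        norm_num
        have he2 := eigen2 p a φ n s
        rw [cc] at he2
        linear_combination (om p φ n ^ k) * he2

lemma sum_range_two_mul (n : ℕ) (f : ℕ → ℂ) :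
    ∑ i ∈ Finset.range (2*n), f i = ∑ k ∈ Finset.range n, (f (2*k) + f (2*k+1)) := by
  induction n with
  | zero => simp
  | succ m ih =>
    have : 2 * (m+1) = (2*m + 1) + 1 := by ring
    rw [this, Finset.sum_range_succ, Finset.sum_range_succ, Finset.sum_range_succ, ← ih]
    ring_nf

lemma abs_tau (φ : ℝ) : ‖Complex.exp (φ * Complex.I)‖ = 1 := by
  simp [Complex.norm_exp]

lemma star_mul_self_complex (z : ℂ) : star z * z = ((Complex.normSq z : ℝ) : ℂ) := by
  rw [show (star z) = (starRingEnd ℂ) z from rfl, mul_comm, Complex.mul_conj]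

lemma star_om_mul_self (p : ℕ) (φ : ℝ) (n : ℕ) :
    star (om p φ n) * om p φ n = 1 := by
  rw [star_mul_self_complex, Complex.normSq_eq_norm_sq, abs_om]
  norm_num

lemma zeta_pow (p : ℕ) (hp : 1 ≤ p) (φ : ℝ) (n m : ℕ) :
    (star (om p φ n) * om p φ m) ^ p = 1 := by
  rw [mul_pow, ← star_pow, om_pow p hp φ n, om_pow p hp φ m]
  rw [star_mul_self_complex, Complex.normSq_eq_norm_sq, abs_tau]
  norm_num

lemma zeta_ne_one (p : ℕ) (hp : 1 ≤ p) (φ : ℝ) (n m : ℕ) (hn : n < p) (hm : m < p)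
    (hnm : n ≠ m) : star (om p φ n) * om p φ m ≠ 1 := by
  have hze : star (om p φ n) * om p φ m
      = Complex.exp ((((2*Real.pi*(m:ℝ) - 2*Real.pi*(n:ℝ))/p : ℝ)) * Complex.I) := by
    rw [om, om]
    rw [show (star (Complex.exp ((((φ + 2 * Real.pi * ((n:ℝ) + 1)) / p : ℝ)) * Complex.I)))
        = Complex.exp (-((((φ + 2 * Real.pi * ((n:ℝ) + 1)) / p : ℝ)) * Complex.I)) from ?_]
    rotate_left
    · rw [show (star (Complex.exp ((((φ + 2 * Real.pi * ((n:ℝ) + 1)) / p : ℝ)) * Complex.I)))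
          = (starRingEnd ℂ) (Complex.exp ((((φ + 2 * Real.pi * ((n:ℝ) + 1)) / p : ℝ)) * Complex.I)) from rfl,
        ← Complex.exp_conj]
      congr 1
      rw [map_mul, Complex.conj_I, Complex.conj_ofReal]
      ring
    rw [← Complex.exp_add]
    congr 1
    push_cast
    have hp0 : (p:ℂ) ≠ 0 := by exact_mod_cast (by omega : p ≠ 0)
    field_simp
    ring
  rw [hze]
  intro hcon
  rw [Complex.exp_eq_one_iff] at hcon
  obtain ⟨k, hk⟩ := hcon
  have hI : ((((2*Real.pi*(m:ℝ) - 2*Real.pi*(n:ℝ))/p : ℝ)) : ℂ) = (k:ℂ) * (2 * Real.pi) := by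
    rw [show (k:ℂ) * (2 * Real.pi * Complex.I) = ((k:ℂ) * (2 * Real.pi)) * Complex.I by ring] at hk
    exact mul_right_cancel₀ Complex.I_ne_zero hk
  have hreal : ((2*Real.pi*(m:ℝ) - 2*Real.pi*(n:ℝ))/p : ℝ) = (k:ℝ) * (2 * Real.pi) := by
    exact_mod_cast hI
  have hp0 : (p:ℝ) ≠ 0 := by exact_mod_cast (by omega : p ≠ 0)
  have hpi : (0:ℝ) < Real.pi := Real.pi_pos
  have hmn : (m:ℝ) - (n:ℝ) = (k:ℝ) * p := by
    field_simp at hreal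
    nlinarith [hreal]
  have hint : (m:ℤ) - (n:ℤ) = k * p := by exact_mod_cast hmn
  have hp1 : (1:ℤ) ≤ (p:ℤ) := by exact_mod_cast hp
  rcases lt_trichotomy k 0 with hk0 | hk0 | hk0
  · have hle : k * (p:ℤ) ≤ -p := by nlinarith
    omega
  · rw [hk0, zero_mul] at hint
    omega
  · have hle : (p:ℤ) ≤ k * p := by nlinarith
    omega

noncomputable def ip2 (p : ℕ) (a φ : ℝ) (n m s t : ℕ) : ℂ :=
  star (uv p a φ n s 0) * uv p a φ m t 0 + star (uv p a φ n s 1) * uv p a φ m t 1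

lemma ip2_eq_ip (p : ℕ) (a φ : ℝ) (n s t : ℕ) : ip2 p a φ n n s t = ip p a φ n s t := rfl

lemma VhV (p : ℕ) (hp : 1 ≤ p) (a φ : ℝ) :
    (Vm p a φ)ᴴ * Vm p a φ =
      Matrix.diagonal (fun j : Fin (2*p) =>
        (p:ℂ) * ip p a φ ((j:ℕ)/2) ((j:ℕ)%2) ((j:ℕ)%2)) := by
  ext j j'
  rw [Matrix.mul_apply]
  set n := (j:ℕ)/2 with hn
  set s := (j:ℕ)%2 with hs
  set m := (j':ℕ)/2 with hm
  set t := (j':ℕ)%2 with ht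
  have key : ∑ i : Fin (2*p), (Vm p a φ)ᴴ j i * Vm p a φ i j'
      = (∑ k ∈ Finset.range p, (star (om p φ n) * om p φ m) ^ k) * ip2 p a φ n m s t := by
    have step1 : ∑ i : Fin (2*p), (Vm p a φ)ᴴ j i * Vm p a φ i j'
        = ∑ iv ∈ Finset.range (2*p),
          (star (om p φ n ^ (iv/2) * uv p a φ n s (iv%2)) *
            (om p φ m ^ (iv/2) * uv p a φ m t (iv%2))) := by
      rw [← Fin.sum_univ_eq_sum_range (fun iv =>
        (star (om p φ n ^ (iv/2) * uv p a φ n s (iv%2)) *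
          (om p φ m ^ (iv/2) * uv p a φ m t (iv%2)))) (2*p)]
      exact Finset.sum_congr rfl (fun i _ => by
        rw [Matrix.conjTranspose_apply]
        simp only [Vm, RCLike.star_def]
        rfl)
    rw [step1, sum_range_two_mul]
    have step2 : ∀ k ∈ Finset.range p,
        (star (om p φ n ^ (2*k/2) * uv p a φ n s (2*k%2)) *
          (om p φ m ^ (2*k/2) * uv p a φ m t (2*k%2)) +
         star (om p φ n ^ ((2*k+1)/2) * uv p a φ n s ((2*k+1)%2)) *
          (om p φ m ^ ((2*k+1)/2) * uv p a φ m t ((2*k+1)%2)))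
        = (star (om p φ n) * om p φ m) ^ k * ip2 p a φ n m s t := by
      intro k hk
      have d1 : 2*k/2 = k := by omega
      have d2 : 2*k%2 = 0 := by omega
      have d3 : (2*k+1)/2 = k := by omega
      have d4 : (2*k+1)%2 = 1 := by omega
      rw [d1, d2, d3, d4, ip2, star_mul', star_mul', star_pow]
      ring
    rw [Finset.sum_congr rfl step2]
    exact (Finset.sum_mul _ _ _).symm
  rw [key]
  have hnp : n < p := by omega
  have hmp : m < p := by omega
  rcases eq_or_ne j j' with rfl | hjj
  · rw [Matrix.diagonal_apply_eq]
    have h1 : star (om p φ n) * om p φ n = 1 := star_om_mul_self p φ n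
    rw [h1, ip2_eq_ip]
    simp
    exact Or.inl rfl
  · rw [Matrix.diagonal_apply_ne _ hjj]
    rcases eq_or_ne n m with hnm | hnm
    · have hst : s ≠ t := by
        have : (j:ℕ) ≠ (j':ℕ) := fun h => hjj (Fin.ext h)
        omega
      rw [← hnm, ip2_eq_ip, ip_ne p a φ n s t (by omega) (by omega) hst, mul_zero]
    · rw [geom_sum_eq (zeta_ne_one p hp φ n m hnp hmp hnm) p, zeta_pow p hp φ n m]
      simp

lemma Vm_isUnit (p : ℕ) (hp : 1 ≤ p) (a φ : ℝ) : IsUnit (Vm p a φ) := by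
  have h := VhV p hp a φ
  have hdet : (Vm p a φ)ᴴ.det * (Vm p a φ).det ≠ 0 := by
    rw [← Matrix.det_mul, h, Matrix.det_diagonal]
    refine Finset.prod_ne_zero_iff.mpr (fun j _ => ?_)
    exact mul_ne_zero (by exact_mod_cast (by omega : p ≠ 0))
      (ip_self_ne_zero p a φ _ _ (by omega))
  rw [Matrix.isUnit_iff_isUnit_det, isUnit_iff_ne_zero]
  exact fun h0 => hdet (by rw [h0, mul_zero])

lemma lam_eq (p : ℕ) (a φ : ℝ) (m : ℕ) (nn : ℕ) (hm : m + 1 = nn) :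
    ((lam p a φ m : ℝ) : ℂ)
      = (‖(a : ℂ) +
          Complex.exp (((φ + 2 * Real.pi * nn) / p : ℝ) * Complex.I)‖ : ℂ) := by
  rw [lam, om]
  norm_num
  congr 3
  rw [← hm]
  push_cast
  ring

end FloquetAux

open Complex in
/-- Eigenvalues of the Floquet matrix `K⁰(e^{iφ}, a)` of the 2-periodic Jacobi operator with
alternating off-diagonal entries `1, a, 1, a, …` on `2p` sites and `e^{iφ}`-twisted boundary
conditions: they are exactly `±|a + e^{i(φ+2πn)/p}|`, `n ∈ {1,…,p}`. -/
theorem floquet_matrix_eigenvalues (p : ℕ) (hp : 1 ≤ p) (a φ : ℝ) (ha : 0 < a)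
    (K : Matrix (Fin (2 * p)) (Fin (2 * p)) ℂ)
    (hK : ∀ i j : Fin (2 * p), K i j =
      (if (i : ℕ) + 1 = (j : ℕ) then (if (i : ℕ) % 2 = 0 then 1 else (a : ℂ)) else 0) +
      (if (j : ℕ) + 1 = (i : ℕ) then (if (j : ℕ) % 2 = 0 then 1 else (a : ℂ)) else 0) +
      (if (i : ℕ) = 0 ∧ (j : ℕ) = 2 * p - 1 then
        (a : ℂ) / Complex.exp (φ * Complex.I) else 0) +
      (if (i : ℕ) = 2 * p - 1 ∧ (j : ℕ) = 0 then
        Complex.exp (φ * Complex.I) * (a : ℂ) else 0)) :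
    spectrum ℂ K =
      {z : ℂ | ∃ n ∈ Finset.Icc 1 p,
        z = (‖(a : ℂ) +
              Complex.exp (((φ + 2 * Real.pi * n) / p : ℝ) * Complex.I)‖ : ℂ) ∨
        z = -(‖(a : ℂ) +
              Complex.exp (((φ + 2 * Real.pi * n) / p : ℝ) * Complex.I)‖ : ℂ)} := by
  classical
  have hu := FloquetAux.Vm_isUnit p hp a φ
  set D : Matrix (Fin (2 * p)) (Fin (2 * p)) ℂ :=
    Matrix.diagonal (fun j : Fin (2 * p) => FloquetAux.dd p a φ (j : ℕ)) with hD
  have hKV : K * FloquetAux.Vm p a φ = FloquetAux.Vm p a φ * D :=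
    FloquetAux.KV p hp a φ K hK
  have hmulinv : (hu.unit : Matrix (Fin (2 * p)) (Fin (2 * p)) ℂ) * ((hu.unit⁻¹ : (Matrix (Fin (2 * p)) (Fin (2 * p)) ℂ)ˣ) : Matrix (Fin (2 * p)) (Fin (2 * p)) ℂ) = 1 :=
    hu.unit.mul_inv
  have hconj : K = ((hu.unit : Matrix (Fin (2 * p)) (Fin (2 * p)) ℂ)) * D * ((hu.unit⁻¹ : (Matrix (Fin (2 * p)) (Fin (2 * p)) ℂ)ˣ) : Matrix (Fin (2 * p)) (Fin (2 * p)) ℂ) := by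
    have hstep : K * ((hu.unit : Matrix (Fin (2 * p)) (Fin (2 * p)) ℂ)) = ((hu.unit : Matrix (Fin (2 * p)) (Fin (2 * p)) ℂ)) * D := by rw [hu.unit_spec]; exact hKV
    calc K = K * ((hu.unit : Matrix (Fin (2 * p)) (Fin (2 * p)) ℂ) * ((hu.unit⁻¹ : (Matrix (Fin (2 * p)) (Fin (2 * p)) ℂ)ˣ) : Matrix (Fin (2 * p)) (Fin (2 * p)) ℂ)) := by
          rw [hmulinv, mul_one]
    _ = (K * ((hu.unit : Matrix (Fin (2 * p)) (Fin (2 * p)) ℂ))) * ((hu.unit⁻¹ : (Matrix (Fin (2 * p)) (Fin (2 * p)) ℂ)ˣ) : Matrix (Fin (2 * p)) (Fin (2 * p)) ℂ) := by rw [mul_assoc]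
    _ = ((hu.unit : Matrix (Fin (2 * p)) (Fin (2 * p)) ℂ)) * D * ((hu.unit⁻¹ : (Matrix (Fin (2 * p)) (Fin (2 * p)) ℂ)ˣ) : Matrix (Fin (2 * p)) (Fin (2 * p)) ℂ) := by rw [hstep]
  rw [hconj, spectrum.units_conjugate, hD, spectrum_diagonal]
  ext z
  simp only [Set.mem_range, Set.mem_setOf_eq]
  constructor
  · rintro ⟨j, rfl⟩
    refine ⟨(j : ℕ) / 2 + 1, Finset.mem_Icc.mpr (by omega), ?_⟩
    by_cases hj : (j : ℕ) % 2 = 0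
    · left
      rw [FloquetAux.dd, FloquetAux.mu, hj, if_pos rfl]
      exact FloquetAux.lam_eq p a φ _ _ rfl
    · right
      rw [FloquetAux.dd, FloquetAux.mu, if_neg (by omega)]
      rw [FloquetAux.lam_eq p a φ ((j:ℕ)/2) ((j:ℕ)/2 + 1) rfl]
  · rintro ⟨nn, hnn, h | h⟩
    · rw [Finset.mem_Icc] at hnn
      refine ⟨⟨2 * (nn - 1), by omega⟩, ?_⟩
      rw [FloquetAux.dd, Fin.val_mk]
      have d1 : 2 * (nn - 1) % 2 = 0 := by omega
      have d2 : 2 * (nn - 1) / 2 = nn - 1 := by omega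
      rw [d1, d2, FloquetAux.mu, if_pos rfl, FloquetAux.lam_eq p a φ (nn - 1) nn (by omega), h]
    · rw [Finset.mem_Icc] at hnn
      refine ⟨⟨2 * (nn - 1) + 1, by omega⟩, ?_⟩
      rw [FloquetAux.dd, Fin.val_mk]
      have d1 : (2 * (nn - 1) + 1) % 2 = 1 := by omega
      have d2 : (2 * (nn - 1) + 1) / 2 = nn - 1 := by omega
      rw [d1, d2, FloquetAux.mu, if_neg (by omega),
        FloquetAux.lam_eq p a φ (nn - 1) nn (by omega), h]
end

section
/- For p ≥ 2 and n ∈ {1,…,p−1} with τ_n = e^{iπn/p} and a > 0, a ≠ 1: 1 + τ_n^{p−1} e^{2i·arg(a+τ_n)} ≠ 0; and if a = 1, then 1 + τ_n^{p−1} e^{2i·arg(1+τ_n)} = 0 if and only if n is odd (using arg(1+τ_n) = πn/(2p)). -/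
open Complex

lemma exp_two_arg_eq' (z : ℂ) (hz : z ≠ 0) :
    Complex.exp (2 * z.arg * I) = z / (starRingEnd ℂ) z := by
  have h := Complex.norm_mul_exp_arg_mul_I z
  have habs : ((‖z‖ : ℝ) : ℂ) ≠ 0 := by
    exact_mod_cast (norm_ne_zero_iff.mpr hz)
  have hconj : (starRingEnd ℂ) z = ((‖z‖ : ℝ) : ℂ) * Complex.exp (-(z.arg) * I) := by
    conv_lhs => rw [← h]
    rw [map_mul, Complex.conj_ofReal, ← Complex.exp_conj]
    congr 2
    simp [Complex.conj_I]
  rw [eq_div_iff (by rw [hconj]; exact mul_ne_zero habs (Complex.exp_ne_zero _)), hconj]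
  conv_rhs => rw [← h]
  rw [mul_comm, mul_assoc, ← Complex.exp_add]
  congr 2
  ring

open Complex in
theorem gap_nonvanishing_condition (p : ℕ) (hp : 2 ≤ p)
    (n : ℕ) (hn : n ∈ Finset.Icc 1 (p - 1))
    (τ : ℂ) (hτ : τ = Complex.exp (Real.pi * n / p * Complex.I)) :
    (∀ a : ℝ, 0 < a → a ≠ 1 →
      1 + τ ^ (p - 1) * Complex.exp (2 * Complex.arg ((a : ℂ) + τ) * Complex.I) ≠ 0) ∧
    (1 + τ ^ (p - 1) * Complex.exp (2 * Complex.arg (1 + τ) * Complex.I) = 0 ↔ Odd n) := by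
  obtain ⟨hn1, hn2⟩ := Finset.mem_Icc.mp hn
  have hp0 : (0:ℝ) < p := by positivity
  have hpc : (p:ℂ) ≠ 0 := by exact_mod_cast hp0.ne'
  have hnp : n < p := by omega
  set θ : ℝ := Real.pi * n / p with hθdef
  have hθ0 : 0 < θ :=
    div_pos (mul_pos Real.pi_pos (by exact_mod_cast Nat.pos_of_ne_zero (by omega))) hp0
  have hθπ : θ < Real.pi := by
    rw [hθdef, div_lt_iff₀ hp0]
    have : (n:ℝ) < p := by exact_mod_cast hnp
    nlinarith [Real.pi_pos]
  have hτ' : τ = Complex.exp ((θ:ℂ) * I) := by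
    rw [hτ]; congr 1; rw [hθdef]; push_cast; ring
  have hτ0 : τ ≠ 0 := by rw [hτ']; exact Complex.exp_ne_zero _
  have hτp : τ ^ p = (-1 : ℂ) ^ n := by
    rw [hτ', ← Complex.exp_nat_mul]
    have h1 : (p:ℂ) * ((θ:ℂ) * I) = (n:ℕ) * (Real.pi * I) := by
      rw [hθdef]; push_cast; field_simp
    rw [h1, Complex.exp_nat_mul, Complex.exp_pi_mul_I]
  have hτpm : τ ^ (p - 1) * τ = (-1:ℂ)^n := by
    rw [← pow_succ, Nat.sub_add_cancel (by omega), hτp]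
  have him : τ.im = Real.sin θ := by
    rw [hτ']
    simpa using Complex.exp_ofReal_mul_I_im θ
  have hsin : 0 < Real.sin θ := Real.sin_pos_of_pos_of_lt_pi hθ0 hθπ
  have hτconj : (starRingEnd ℂ) τ = 1 / τ := by
    rw [hτ', ← Complex.exp_conj, eq_div_iff (Complex.exp_ne_zero _), ← Complex.exp_add]
    simp [Complex.conj_I]
  have hτne1 : τ ≠ 1 := by
    intro h; rw [h] at him; simp at him; linarith
  have hτnem1 : τ ≠ -1 := by
    intro h; rw [h] at him; simp at him; linarith
  have key : ∀ a : ℝ, 0 < a →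
      ((1 + τ ^ (p - 1) * Complex.exp (2 * Complex.arg ((a : ℂ) + τ) * Complex.I) = 0)
       ↔ ((a:ℂ) * τ + 1) + (-1:ℂ)^n * ((a:ℂ) + τ) = 0) := by
    intro a ha
    have hz : ((a:ℂ) + τ) ≠ 0 := by
      intro h
      have h2 : ((a:ℂ) + τ).im = 0 := by rw [h]; simp
      simp [him] at h2
      linarith
    rw [exp_two_arg_eq' _ hz]
    have hcz : (starRingEnd ℂ) ((a:ℂ) + τ) ≠ 0 := by
      intro h
      apply hz
      have h2 := congrArg (starRingEnd ℂ) h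
      rwa [Complex.conj_conj, map_zero] at h2
    have hconjz : (starRingEnd ℂ) ((a:ℂ) + τ) = (a:ℂ) + 1/τ := by
      rw [map_add, Complex.conj_ofReal, hτconj]
    have hmul : τ * ((starRingEnd ℂ) ((a:ℂ) + τ)) = (a:ℂ) * τ + 1 := by
      rw [hconjz]
      field_simp
    have hmulne : τ * ((starRingEnd ℂ) ((a:ℂ) + τ)) ≠ 0 := mul_ne_zero hτ0 hcz
    have hid : (1 + τ ^ (p - 1) * (((a:ℂ) + τ) / ((starRingEnd ℂ) ((a:ℂ) + τ))))
        * (τ * ((starRingEnd ℂ) ((a:ℂ) + τ)))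
        = ((a:ℂ) * τ + 1) + (-1:ℂ)^n * ((a:ℂ) + τ) := by
      have e1 : ∀ t w c : ℂ, c ≠ 0 → (1 + t * (w / c)) * (τ * c) = τ * c + (t * τ) * w := by
        intro t w c hc
        field_simp
      rw [e1 _ _ _ hcz, hτpm, hmul]
    constructor
    · intro h
      rw [← hid, h, zero_mul]
    · intro h
      rw [h] at hid
      rcases mul_eq_zero.mp hid with h2 | h2
      · exact h2
      · exact absurd h2 hmulne
  constructor
  · intro a ha hane h
    rw [key a ha] at h
    rcases Nat.even_or_odd n with he | ho
    · rw [he.neg_one_pow] at h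
      have h3 : ((a:ℂ) + 1) * (1 + τ) = 0 := by linear_combination h
      rcases mul_eq_zero.mp h3 with h1 | h1
      · have : (a:ℝ) + 1 = 0 := by exact_mod_cast congrArg Complex.re h1
        linarith
      · exact hτnem1 (by linear_combination h1)
    · rw [ho.neg_one_pow] at h
      have h3 : ((a:ℂ) - 1) * (τ - 1) = 0 := by linear_combination h
      rcases mul_eq_zero.mp h3 with h1 | h1
      · have : (a:ℝ) - 1 = 0 := by exact_mod_cast congrArg Complex.re h1
        exact hane (by linarith)
      · exact hτne1 (by linear_combination h1)
  · have h1 : (1:ℂ) + τ = ((1:ℝ):ℂ) + τ := by norm_num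
    rw [h1, key 1 one_pos]
    push_cast
    constructor
    · intro h
      by_contra hodd
      have he : Even n := Nat.not_odd_iff_even.mp hodd
      rw [he.neg_one_pow] at h
      have h3 : (2:ℂ) * (1 + τ) = 0 := by linear_combination h
      rcases mul_eq_zero.mp h3 with h2 | h2
      · norm_num at h2
      · exact hτnem1 (by linear_combination h2)
    · intro ho
      rw [ho.neg_one_pow]
      ring
end
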